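/- Let r ≥ 1 and let X : Fin r → ℝ → ℂ be such that each Xⱼ is differentiable at 0 with Xⱼ(0) ≠ 0, and assume that for all t ∈ ℝ one has ∏_{j=1}^{r} Xⱼ(t) = 1 and ∑_{m=1}^{r} ∏_{j=1}^{m} Xⱼ(t) = 0. Define qⱼ := Xⱼ′(0)/Xⱼ(0). Then ∑_{j=1}^{r} qⱼ = 0 and ∑_{m=1}^{r} (∑_{j=1}^{m} qⱼ) · ∏_{j=1}^{m} Xⱼ(0) = 0. -/

import Mathlib

/-- Tangent space to the variety of cross ratios: the logarithmic derivative
`qⱼ = Xⱼ′(0)/Xⱼ(0)` of a family satisfying the product and sum relations satisfies the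
linearized relations. -/
theorem stmt_8 (r : ℕ) (hr : 1 ≤ r) (X : Fin r → ℝ → ℂ)
    (hdiff : ∀ j, DifferentiableAt ℝ (X j) 0) (hX0 : ∀ j, X j 0 ≠ 0)
    (hprod : ∀ t : ℝ, ∏ j, X j t = 1)
    (hsum : ∀ t : ℝ, ∑ m ∈ Finset.range r,
        ∏ j ∈ Finset.univ.filter (fun j : Fin r => (j : ℕ) ≤ m), X j t = 0)
    (q : Fin r → ℂ) (hq : ∀ j, q j = deriv (X j) 0 / X j 0) :
    (∑ j, q j = 0) ∧
      ∑ m ∈ Finset.range r,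
          (∑ j ∈ Finset.univ.filter (fun j : Fin r => (j : ℕ) ≤ m), q j) *
            ∏ j ∈ Finset.univ.filter (fun j : Fin r => (j : ℕ) ≤ m), X j 0 = 0 := by
  have key : ∀ s : Finset (Fin r), HasDerivAt (fun t => ∏ j ∈ s, X j t)
      ((∑ i ∈ s, q i) * ∏ j ∈ s, X j 0) 0 := by
    intro s
    have h := HasDerivAt.fun_finsetProd (u := s) (f := X)
      (f' := fun i => deriv (X i) 0) (fun i _ => (hdiff i).hasDerivAt)
    convert h using 1
    case e'_4 => rfl
    rw [Finset.sum_mul]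
    refine Finset.sum_congr rfl fun i hi => ?_
    rw [hq i, ← Finset.mul_prod_erase s (fun j => X j 0) hi, smul_eq_mul]
    field_simp [hX0 i]
  constructor
  · have h1 : HasDerivAt (fun t : ℝ => ∏ j, X j t) ((∑ i, q i) * ∏ j, X j 0) 0 :=
      key Finset.univ
    have h2 : HasDerivAt (fun t : ℝ => ∏ j, X j t) 0 0 := by
      have : (fun t : ℝ => ∏ j, X j t) = fun _ => (1 : ℂ) := funext hprod
      rw [this]; exact hasDerivAt_const 0 1
    have := h1.unique h2
    rwa [hprod 0, mul_one] at this
  · have h1 : HasDerivAt (fun t : ℝ => ∑ m ∈ Finset.range r,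
        ∏ j ∈ Finset.univ.filter (fun j : Fin r => (j : ℕ) ≤ m), X j t)
        (∑ m ∈ Finset.range r,
          (∑ j ∈ Finset.univ.filter (fun j : Fin r => (j : ℕ) ≤ m), q j) *
            ∏ j ∈ Finset.univ.filter (fun j : Fin r => (j : ℕ) ≤ m), X j 0) 0 :=
      HasDerivAt.fun_sum fun m _ => key _
    have h2 : HasDerivAt (fun t : ℝ => ∑ m ∈ Finset.range r,
        ∏ j ∈ Finset.univ.filter (fun j : Fin r => (j : ℕ) ≤ m), X j t) 0 0 := by
      have : (fun t : ℝ => ∑ m ∈ Finset.range r,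
          ∏ j ∈ Finset.univ.filter (fun j : Fin r => (j : ℕ) ≤ m), X j t)
          = fun _ => (0 : ℂ) := funext hsum
      rw [this]; exact hasDerivAt_const 0 0
    exact h1.unique h2
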